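/- Let φ be a simple martingale on a probability space with filtration {F_n}_{n≥0}, F_0 trivial, whose square function satisfies Sφ ≤ 1 almost surely. Then for every λ > 0 the tail estimate P(φ_∞ − φ_0 ≥ λ) ≤ (e/2)·e^{−λ} holds. Equivalently, by homogeneity, P(φ_∞ − φ_0 ≥ λ) ≤ (e/2)·e^{−λ/‖Sφ‖_{L_∞}} for any simple martingale with ‖Sφ‖_{L_∞} > 0. -/

import Mathlib

open MeasureTheory Filter

set_option maxHeartbeats 1000000

noncomputable def Fb (z : ℝ) : ℝ :=
  if z ≤ 0 then 1 else if z ≤ 1 then 1 / (1 + z ^ 2) else Real.exp (1 - z) / 2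

noncomputable def Fd (z : ℝ) : ℝ :=
  if z ≤ 0 then 0 else if z ≤ 1 then -(2 * z) / (1 + z ^ 2) ^ 2 else -(Real.exp (1 - z) / 2)

lemma Fb_nonneg (z : ℝ) : 0 ≤ Fb z := by
  unfold Fb; split_ifs <;> positivity

lemma Fb_le_one (z : ℝ) : Fb z ≤ 1 := by
  unfold Fb
  split_ifs with h1 h2
  · exact le_rfl
  · rw [div_le_one (by positivity)]; nlinarith [sq_nonneg z]
  · have : Real.exp (1 - z) ≤ 1 := by
      rw [Real.exp_le_one_iff]; linarith
    linarith

lemma Fd_nonpos (z : ℝ) : Fd z ≤ 0 := by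
  unfold Fd
  split_ifs with h1 h2
  · exact le_rfl
  · push_neg at h1
    have : (0:ℝ) < (1 + z^2)^2 := by positivity
    apply div_nonpos_of_nonpos_of_nonneg <;> nlinarith
  · have := Real.exp_pos (1 - z); linarith

lemma neg_one_le_Fd (z : ℝ) : -1 ≤ Fd z := by
  unfold Fd
  split_ifs with h1 h2
  · norm_num
  · push_neg at h1
    rw [neg_div, neg_le_neg_iff, div_le_one (by positivity)]
    nlinarith [sq_nonneg (z - 1), sq_nonneg z, sq_nonneg (z^2)]
  · have h3 : Real.exp (1 - z) ≤ 1 := by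
      rw [Real.exp_le_one_iff]; linarith
    linarith

/-- exp lower bound, cubic version not needed; quadratic is in mathlib. -/
lemma expLB (x : ℝ) (hx : 0 ≤ x) : 1 + x + x ^ 2 / 2 ≤ Real.exp x :=
  Real.quadratic_le_exp_of_nonneg hx

/-- `(1-x) * exp x ≤ 1` for all `x`. -/
lemma one_sub_mul_exp_le (x : ℝ) : (1 - x) * Real.exp x ≤ 1 := by
  have h := Real.add_one_le_exp (-x)
  have hp := Real.exp_pos x
  have hh : Real.exp (-x) * Real.exp x = 1 := by
    rw [← Real.exp_add]; simp
  nlinarith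

/-- `exp q * (1 - q + q²/2 - q³/6) ≤ 1` for `q ∈ [0,1]`. -/
lemma expA (q : ℝ) (h0 : 0 ≤ q) (h1 : q ≤ 1) :
    Real.exp q * (1 - q + q ^ 2 / 2 - q ^ 3 / 6) ≤ 1 := by
  have hb := Real.exp_bound' h0 h1 (n := 4) (by norm_num)
  have hs : (∑ m ∈ Finset.range 4, q ^ m / m.factorial) = 1 + q + q^2/2 + q^3/6 := by
    norm_num [Finset.sum_range_succ, Nat.factorial]
  rw [hs] at hb
  norm_num [Nat.factorial] at hb
  have hA0 : 0 ≤ 1 - q + q ^ 2 / 2 - q ^ 3 / 6 := by nlinarith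
  nlinarith [pow_nonneg h0 4, pow_nonneg h0 6, sq_nonneg q]

/-- For `w ≥ 0`, `Fb w ≤ 1/(1+w²)`. -/
lemma Fb_le_cantelli (w : ℝ) (hw : 0 ≤ w) : Fb w ≤ 1 / (1 + w ^ 2) := by
  unfold Fb
  split_ifs with h1 h2
  · have : w = 0 := le_antisymm h1 hw
    simp [this]
  · exact le_rfl
  · push_neg at h1 h2
    rw [div_le_div_iff₀ (by norm_num) (by positivity)]
    have := expLB (w - 1) (by linarith)
    have h3 : (1 + w^2) / 2 ≤ Real.exp (w - 1) := by nlinarith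
    have h4 : Real.exp (1 - w) * Real.exp (w - 1) = 1 := by
      rw [← Real.exp_add]; simp
    have h5 := Real.exp_pos (1 - w)
    have h6 := Real.exp_pos (w - 1)
    nlinarith

lemma Fb_of_nonpos {z : ℝ} (h : z ≤ 0) : Fb z = 1 := by rw [Fb, if_pos h]
lemma Fb_of_mid {z : ℝ} (h0 : 0 < z) (h1 : z ≤ 1) : Fb z = 1 / (1 + z ^ 2) := by
  rw [Fb, if_neg (by linarith), if_pos h1]
lemma Fb_of_hi {z : ℝ} (h : 1 < z) : Fb z = Real.exp (1 - z) / 2 := by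
  rw [Fb, if_neg (by linarith), if_neg (by linarith)]
lemma Fd_of_nonpos {z : ℝ} (h : z ≤ 0) : Fd z = 0 := by rw [Fd, if_pos h]
lemma Fd_of_mid {z : ℝ} (h0 : 0 < z) (h1 : z ≤ 1) : Fd z = -(2 * z) / (1 + z ^ 2) ^ 2 := by
  rw [Fd, if_neg (by linarith), if_pos h1]
lemma Fd_of_hi {z : ℝ} (h : 1 < z) : Fd z = -(Real.exp (1 - z) / 2) := by
  rw [Fd, if_neg (by linarith), if_neg (by linarith)]


lemma key (z u : ℝ) (hu1 : -1 < u) (hu2 : u < 1) :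
    Fb ((z - u) / Real.sqrt (1 - u ^ 2)) ≤ Fb z - u * Fd z := by
  have hc2' : (0:ℝ) < 1 - u ^ 2 := by nlinarith
  set c := Real.sqrt (1 - u ^ 2) with hcdef
  have hc : 0 < c := Real.sqrt_pos.mpr hc2'
  have hc2 : c ^ 2 = 1 - u ^ 2 := Real.sq_sqrt hc2'.le
  have hc1 : c ≤ 1 := by nlinarith
  set w := (z - u) / c with hwdef
  have hwc : w * c = z - u := div_mul_cancel₀ _ hc.ne'
  clear_value c w
  rcases le_or_gt z 0 with hz | hz
  · rw [Fb_of_nonpos hz, Fd_of_nonpos hz]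
    simpa using Fb_le_one w
  rcases le_or_gt z 1 with hz1 | hz1
  · -- 0 < z ≤ 1
    rw [Fb_of_mid hz hz1, Fd_of_mid hz hz1]
    have hp : (0:ℝ) < 1 + z ^ 2 := by positivity
    have hRHS : 1 / (1 + z ^ 2) - u * (-(2 * z) / (1 + z ^ 2) ^ 2)
        = (1 + z ^ 2 + 2 * z * u) / (1 + z ^ 2) ^ 2 := by
      field_simp; ring
    rw [hRHS]
    rcases le_or_gt w 0 with hw | hw
    · have hzu : z ≤ u := by nlinarith [mul_nonneg (neg_nonneg.mpr hw) hc.le]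
      rw [Fb_of_nonpos hw, le_div_iff₀ (by positivity)]
      have h2 : 2 * z * z ≤ 2 * z * u := by nlinarith
      have h3 : z ^ 2 * (z ^ 2 - 1) ≤ 0 := mul_nonpos_of_nonneg_of_nonpos (sq_nonneg z) (by nlinarith)
      nlinarith [h2, h3]
    · refine (Fb_le_cantelli w hw.le).trans ?_
      rw [div_le_div_iff₀ (by positivity) (by positivity)]
      have hw2 : w ^ 2 * c ^ 2 = (z - u) ^ 2 := by rw [← mul_pow, hwc]
      nlinarith [sq_nonneg (u * (1 - z ^ 2)), sq_nonneg (z - u), sq_nonneg w, sq_nonneg u,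
        mul_pos hc2' hc2', sq_nonneg (w * u), sq_nonneg (z * u)]
  · -- z > 1
    rw [Fb_of_hi hz1, Fd_of_hi hz1]
    have hwpos : 0 < w := by
      have : 0 < z - u := by linarith
      nlinarith [hwc]
    have hE := Real.exp_pos (1 - z)
    have hsplit : Real.exp (1 - w) = Real.exp (1 - z) * Real.exp (z - w) := by
      rw [← Real.exp_add]; ring_nf
    rcases le_or_gt w 1 with hw1 | hw1
    · -- C2 : w ≤ 1
      rw [Fb_of_mid hwpos hw1]
      have hzu : z - u ≤ c := by nlinarith [hwc]
      have hcon : (z - 1) ^ 2 + 2 * (z - 1) * (1 - u) + 2 * (1 - u) ^ 2 ≤ 2 * (1 - u) := by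
        nlinarith [hc2]
      have htq : 1 - u ≤ 1 - (z - 1) := by nlinarith
      have hq1 : z - 1 ≤ 1 := by nlinarith
      have hq0 : 0 < z - 1 := by linarith
      have ht0 : 0 < 1 - u := by linarith
      set q : ℝ := z - 1 with hqdef
      set t : ℝ := 1 - u with htdef
      have hApos : (0:ℝ) < 1 - q + q ^ 2 / 2 - q ^ 3 / 6 := by nlinarith
      have hexpA := expA q hq0.le hq1
      have hAD : 2 * t ≤ (2 * t + 2 * q * t + q ^ 2) * (1 - q + q ^ 2 / 2 - q ^ 3 / 6) := by
        have hD0 : (0:ℝ) ≤ 1/2 - q/3 + q^2/6 := by nlinarith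
        have hAt : 2 * t * (1/2 - q/3 + q^2/6) ≤ 1 - q + q ^ 2 / 2 - q ^ 3 / 6 := by nlinarith
        nlinarith [sq_nonneg q]
      have h4 : 2 * t * Real.exp q ≤ 2 * t + 2 * q * t + q ^ 2 := by
        have h3 : 2 * t * Real.exp q * (1 - q + q ^ 2 / 2 - q ^ 3 / 6)
            ≤ (2 * t + 2 * q * t + q ^ 2) * (1 - q + q ^ 2 / 2 - q ^ 3 / 6) := by
          nlinarith [Real.exp_pos q]
        exact le_of_mul_le_mul_right (by linarith) hApos
      have h5 : t * ((1 + u) * (1 + w ^ 2)) = 2 * t + 2 * q * t + q ^ 2 := by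
        have h6 : w ^ 2 * c ^ 2 = (q + t) ^ 2 := by
          rw [← mul_pow, hwc, hqdef, htdef]; ring
        have hct : c ^ 2 = t * (1 + u) := by rw [hc2, htdef]; ring
        linear_combination (1 + w ^ 2) * hct - hct + h6 - 2 * w ^ 2 * hc2
      have hez : Real.exp (1 - z) * Real.exp q = 1 := by
        rw [← Real.exp_add, hqdef]; norm_num
      rw [div_le_iff₀ (by positivity : (0:ℝ) < 1 + w ^ 2)]
      have h7 : 2 * t * (Real.exp (1 - z) * Real.exp q) ≤
          (Real.exp (1 - z)) * (2 * t + 2 * q * t + q ^ 2) := by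
        have := mul_le_mul_of_nonneg_left h4 hE.le
        nlinarith [this]
      rw [hez] at h7
      -- h7 : 2t ≤ exp(1-z) * (2t + 2qt + q^2) = exp(1-z) * t * ((1+u)(1+w^2))
      rw [← h5] at h7
      rw [show Real.exp (1 - z) * (t * ((1 + u) * (1 + w ^ 2)))
          = t * (Real.exp (1 - z) * ((1 + u) * (1 + w ^ 2))) from by ring] at h7
      have h8 : (2:ℝ) ≤ Real.exp (1 - z) * ((1 + u) * (1 + w ^ 2)) :=
        le_of_mul_le_mul_left (by linarith) ht0
      nlinarith [h8]
    · -- C1 : w > 1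
      rw [Fb_of_hi hw1]
      have hKey : Real.exp (z - w) ≤ 1 + u := by
        rcases le_or_gt u 0 with hu0 | hu0
        · -- u ≤ 0
          have hX0 : 1 - u - c ≤ c * (w - z) := by nlinarith [hwc]
          have hY0 : 0 ≤ 1 - u - c := by nlinarith
          have hXnn : 0 ≤ w - z := by
            by_contra hneg
            push_neg at hneg
            have := mul_neg_of_pos_of_neg hc hneg
            linarith [le_trans hY0 hX0]
          have g0 : (1 + u) * (2 * c ^ 2 + 2 * c * (1 - u - c) + (1 - u - c) ^ 2) = 2 * c ^ 2 := by
            linear_combination (u - 1) * hc2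
          have gmono : 2 * c ^ 2 ≤ (1 + u) * (2 * c ^ 2 + 2 * c * (c * (w - z)) + (c * (w - z)) ^ 2) := by
            have hfac : 0 ≤ (1 + u) * ((c * (w - z)) - (1 - u - c)) * ((c * (w - z)) + (1 - u - c) + 2 * c) := by
              apply mul_nonneg (mul_nonneg (by linarith) (by linarith))
              nlinarith [mul_nonneg hc.le hXnn]
            nlinarith [g0, hfac]
          have hquad : 1 ≤ (1 + u) * (1 + (w - z) + (w - z) ^ 2 / 2) := by
            have hring : (1 + u) * (2 * c ^ 2 + 2 * c * (c * (w - z)) + (c * (w - z)) ^ 2)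
                = 2 * c ^ 2 * ((1 + u) * (1 + (w - z) + (w - z) ^ 2 / 2)) := by ring
            rw [hring] at gmono
            have h2c : (0:ℝ) < 2 * c ^ 2 := by positivity
            nlinarith [gmono, h2c]
          have hexp := expLB (w - z) hXnn
          have hprod : Real.exp (z - w) * Real.exp (w - z) = 1 := by
            rw [← Real.exp_add]; norm_num
          nlinarith [Real.exp_pos (z - w), Real.exp_pos (w - z), hquad, hexp]
        · -- u > 0
          rcases le_or_gt (z - w) 0 with hy | hy
          · calc Real.exp (z - w) ≤ 1 := Real.exp_le_one_iff.mpr hy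
              _ ≤ 1 + u := by linarith
          · have hy1 : z - w ≤ u + c - 1 := by
              have : (w - 1) * (1 - c) ≥ 0 := mul_nonneg (by linarith) (by linarith)
              nlinarith [hwc]
            have hcu : c ≤ 1 - u ^ 2 / 2 := by
              have h1 : c = Real.sqrt (1 - u ^ 2) := hcdef
              rw [h1]
              have h2 : (1 - u ^ 2 : ℝ) ≤ (1 - u ^ 2 / 2) ^ 2 := by nlinarith [sq_nonneg u]
              calc Real.sqrt (1 - u ^ 2) ≤ Real.sqrt ((1 - u ^ 2 / 2) ^ 2) := Real.sqrt_le_sqrt h2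
                _ = 1 - u ^ 2 / 2 := Real.sqrt_sq (by nlinarith)
            have hAu : (0:ℝ) < 1 - u + u ^ 2 / 2 - u ^ 3 / 6 := by nlinarith
            have hpoly : 1 ≤ (1 + u) * (1 + u ^ 2 / 2) * (1 - u + u ^ 2 / 2 - u ^ 3 / 6) := by
              have hid : (1 + u) * (1 + u ^ 2 / 2) * (1 - u + u ^ 2 / 2 - u ^ 3 / 6) - 1
                  = u ^ 3 * (1 - u) * (4 - u + u ^ 2) / 12 := by ring
              have hnn : 0 ≤ u ^ 3 * (1 - u) * (4 - u + u ^ 2) / 12 := by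
                apply div_nonneg _ (by norm_num)
                apply mul_nonneg (mul_nonneg (by positivity) (by linarith))
                nlinarith
              linarith
            have hP : 1 ≤ (1 + u) * (2 - c) * (1 - u + u ^ 2 / 2 - u ^ 3 / 6) := by
              have h2c : 1 + u ^ 2 / 2 ≤ 2 - c := by linarith
              nlinarith [hAu, h2c, hpoly, mul_pos (by linarith : (0:ℝ) < 1 + u) hAu]
            have hE1 : Real.exp (c - 1) * (2 - c) ≤ 1 := by
              have h' := one_sub_mul_exp_le (c - 1)
              calc Real.exp (c - 1) * (2 - c) = (1 - (c - 1)) * Real.exp (c - 1) := by ring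
                _ ≤ 1 := h'
            have hE2 := expA u hu0.le hu2.le
            have hEy : Real.exp (z - w) ≤ Real.exp u * Real.exp (c - 1) := by
              rw [← Real.exp_add]
              exact Real.exp_le_exp.mpr (by linarith)
            have hc2lt : (0:ℝ) < 2 - c := by linarith
            have hposX : (0:ℝ) < (2 - c) * (1 - u + u ^ 2 / 2 - u ^ 3 / 6) := mul_pos hc2lt hAu
            have hfinal : Real.exp u * Real.exp (c - 1) ≤ 1 + u := by
              have e1 : Real.exp u * Real.exp (c - 1) * ((2 - c) * (1 - u + u ^ 2 / 2 - u ^ 3 / 6))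
                  = (Real.exp u * (1 - u + u ^ 2 / 2 - u ^ 3 / 6)) * (Real.exp (c - 1) * (2 - c)) := by
                ring
              have s2 : (Real.exp u * (1 - u + u ^ 2 / 2 - u ^ 3 / 6)) * (Real.exp (c - 1) * (2 - c))
                  ≤ (Real.exp u * (1 - u + u ^ 2 / 2 - u ^ 3 / 6)) * 1 :=
                mul_le_mul_of_nonneg_left hE1 (by positivity)
              have s4 : (1:ℝ) ≤ (1 + u) * ((2 - c) * (1 - u + u ^ 2 / 2 - u ^ 3 / 6)) := by
                rw [← mul_assoc]; exact hP
              refine le_of_mul_le_mul_right ?_ hposX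
              rw [e1]
              calc (Real.exp u * (1 - u + u ^ 2 / 2 - u ^ 3 / 6)) * (Real.exp (c - 1) * (2 - c))
                  ≤ (Real.exp u * (1 - u + u ^ 2 / 2 - u ^ 3 / 6)) * 1 := s2
                _ = Real.exp u * (1 - u + u ^ 2 / 2 - u ^ 3 / 6) := mul_one _
                _ ≤ 1 := hE2
                _ ≤ (1 + u) * ((2 - c) * (1 - u + u ^ 2 / 2 - u ^ 3 / 6)) := s4
            linarith [hEy, hfinal]
      calc Real.exp (1 - w) / 2 = Real.exp (1 - z) * Real.exp (z - w) / 2 := by rw [hsplit]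
        _ ≤ Real.exp (1 - z) * (1 + u) / 2 := by
              have := mul_le_mul_of_nonneg_left hKey hE.le
              linarith
        _ = Real.exp (1 - z) / 2 - u * -(Real.exp (1 - z) / 2) := by ring

lemma edge (z u : ℝ) (hu : u ^ 2 = 1) :
    (if z ≤ u then (1:ℝ) else 0) ≤ Fb z - u * Fd z := by
  have hcases : u = 1 ∨ u = -1 := by
    have h : (u - 1) * (u + 1) = 0 := by linear_combination hu
    rcases mul_eq_zero.mp h with h | h
    · left; linarith
    · right; linarith
  rcases hcases with rfl | rfl
  · split_ifs with hz
    · rcases le_or_gt z 0 with h0 | h0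
      · rw [Fb_of_nonpos h0, Fd_of_nonpos h0]; norm_num
      · rw [Fb_of_mid h0 hz, Fd_of_mid h0 hz]
        rw [show 1 / (1 + z ^ 2) - 1 * (-(2 * z) / (1 + z ^ 2) ^ 2)
            = (1 + z ^ 2 + 2 * z) / (1 + z ^ 2) ^ 2 from by field_simp; ring]
        rw [le_div_iff₀ (by positivity)]
        nlinarith [sq_nonneg z, sq_nonneg (z - 1), sq_nonneg (z * (z - 1))]
    · push_neg at hz
      rw [Fb_of_hi hz, Fd_of_hi hz]
      have := Real.exp_pos (1 - z)
      nlinarith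
  · split_ifs with hz
    · rw [Fb_of_nonpos (by linarith : z ≤ 0), Fd_of_nonpos (by linarith : z ≤ 0)]
      norm_num
    · push_neg at hz
      rcases le_or_gt z 0 with h0 | h0
      · rw [Fb_of_nonpos h0, Fd_of_nonpos h0]; norm_num
      · rcases le_or_gt z 1 with h1 | h1
        · rw [Fb_of_mid h0 h1, Fd_of_mid h0 h1]
          rw [show 1 / (1 + z ^ 2) - (-1) * (-(2 * z) / (1 + z ^ 2) ^ 2)
              = (1 + z ^ 2 - 2 * z) / (1 + z ^ 2) ^ 2 from by field_simp]
          have h2 : (0:ℝ) ≤ (1 + z ^ 2 - 2 * z) / (1 + z ^ 2) ^ 2 := by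
            apply div_nonneg _ (by positivity)
            nlinarith [sq_nonneg (1 - z)]
          linarith
        · rw [Fb_of_hi h1, Fd_of_hi h1]
          have := Real.exp_pos (1 - z)
          nlinarith

noncomputable def Phi (x v : ℝ) : ℝ :=
  if 0 < v then Fb (x / Real.sqrt v) else if x ≤ 0 then 1 else 0

noncomputable def Csl (x v : ℝ) : ℝ :=
  if 0 < v then -Fd (x / Real.sqrt v) / Real.sqrt v else 0


lemma Phi_nonneg (x v : ℝ) : 0 ≤ Phi x v := by
  unfold Phi; split_ifs
  · exact Fb_nonneg _
  · norm_num
  · norm_num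

lemma Phi_le_one (x v : ℝ) : Phi x v ≤ 1 := by
  unfold Phi; split_ifs
  · exact Fb_le_one _
  · norm_num
  · norm_num

lemma step_core (s z u : ℝ) (hs : 0 < s) (hu2 : u ^ 2 ≤ 1) :
    Phi ((z - u) * s) (s ^ 2 * (1 - u ^ 2)) ≤ Fb z - u * Fd z := by
  rcases lt_or_eq_of_le hu2 with hu1 | hu1
  · have hc0 : (0:ℝ) < 1 - u ^ 2 := by linarith
    have hcpos : 0 < Real.sqrt (1 - u ^ 2) := Real.sqrt_pos.mpr hc0
    have hPhi : Phi ((z - u) * s) (s ^ 2 * (1 - u ^ 2))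
        = Fb ((z - u) / Real.sqrt (1 - u ^ 2)) := by
      rw [Phi, if_pos (by positivity : (0:ℝ) < s ^ 2 * (1 - u ^ 2))]
      congr 1
      rw [Real.sqrt_mul (sq_nonneg s), Real.sqrt_sq hs.le, mul_comm (z - u) s,
        mul_div_mul_left _ _ hs.ne']
    rw [hPhi]
    exact key z u (by nlinarith) (by nlinarith)
  · have h0 : s ^ 2 * (1 - u ^ 2) = 0 := by rw [← hu1]; ring
    rw [Phi, h0, if_neg (lt_irrefl 0)]
    have hiff : ((z - u) * s ≤ 0) = (z ≤ u) := by
      apply propext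
      constructor
      · intro hle; nlinarith
      · intro hzu; exact mul_nonpos_of_nonpos_of_nonneg (by linarith) hs.le
    simp only [hiff]
    exact edge z u hu1

lemma step (x v h : ℝ) (hvh : 0 ≤ v - h ^ 2) :
    Phi (x - h) (v - h ^ 2) ≤ Phi x v + Csl x v * h := by
  by_cases hv : 0 < v
  · have hs : 0 < Real.sqrt v := Real.sqrt_pos.mpr hv
    have hs2 : Real.sqrt v ^ 2 = v := Real.sq_sqrt hv.le
    have hx : x - h = (x / Real.sqrt v - h / Real.sqrt v) * Real.sqrt v := by
      field_simp
    have hv2 : v - h ^ 2 = (Real.sqrt v) ^ 2 * (1 - (h / Real.sqrt v) ^ 2) := by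
      rw [hs2]; field_simp; rw [hs2]; ring
    have hC : Csl x v * h = -(h / Real.sqrt v * Fd (x / Real.sqrt v)) := by
      rw [Csl, if_pos hv]; field_simp
    have hu2 : (h / Real.sqrt v) ^ 2 ≤ 1 := by
      rw [div_pow, hs2, div_le_one hv]; linarith
    calc Phi (x - h) (v - h ^ 2)
        = Phi ((x / Real.sqrt v - h / Real.sqrt v) * Real.sqrt v)
          ((Real.sqrt v) ^ 2 * (1 - (h / Real.sqrt v) ^ 2)) := by rw [← hx, ← hv2]
      _ ≤ Fb (x / Real.sqrt v) - (h / Real.sqrt v) * Fd (x / Real.sqrt v) :=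
          step_core _ _ _ hs hu2
      _ = Phi x v + Csl x v * h := by rw [Phi, if_pos hv, hC]; ring
  · push_neg at hv
    have hh2 : h ^ 2 ≤ 0 := by linarith
    have hh : h = 0 := by nlinarith [sq_nonneg h]
    rw [hh]
    simp [Csl, hv.not_gt]

lemma measurable_Fb : Measurable Fb := by
  unfold Fb
  apply Measurable.ite (measurableSet_le measurable_id measurable_const) measurable_const
  apply Measurable.ite (measurableSet_le measurable_id measurable_const)
  · exact (measurable_const.div ((measurable_const.add ((measurable_id.pow_const 2)))))
  · exact ((measurable_const.sub measurable_id).exp.div_const 2)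

lemma measurable_Fd : Measurable Fd := by
  unfold Fd
  apply Measurable.ite (measurableSet_le measurable_id measurable_const) measurable_const
  apply Measurable.ite (measurableSet_le measurable_id measurable_const)
  · exact ((measurable_const.mul measurable_id).neg.div
      (((measurable_const.add (measurable_id.pow_const 2)).pow_const 2)))
  · exact ((measurable_const.sub measurable_id).exp.div_const 2).neg

lemma measurable_Phi : Measurable fun p : ℝ × ℝ => Phi p.1 p.2 := by
  unfold Phi
  apply Measurable.ite (measurableSet_lt measurable_const measurable_snd)
  · exact measurable_Fb.comp (measurable_fst.div measurable_snd.sqrt)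
  · exact Measurable.ite (measurableSet_le measurable_fst measurable_const)
      measurable_const measurable_const

lemma measurable_Csl : Measurable fun p : ℝ × ℝ => Csl p.1 p.2 := by
  unfold Csl
  apply Measurable.ite (measurableSet_lt measurable_const measurable_snd)
  · exact (measurable_Fd.comp (measurable_fst.div measurable_snd.sqrt)).neg.div
      measurable_snd.sqrt
  · exact measurable_const

lemma Csl_mul_bound (x v h : ℝ) (hvh : 0 ≤ v - h ^ 2) : |Csl x v * h| ≤ 1 := by
  rw [Csl]
  split_ifs with hv
  · have hs : 0 < Real.sqrt v := Real.sqrt_pos.mpr hv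
    have hs2 : Real.sqrt v ^ 2 = v := Real.sq_sqrt hv.le
    rw [abs_mul, abs_div, abs_neg]
    have h1 : |Fd (x / Real.sqrt v)| ≤ 1 := by
      rw [abs_le]; exact ⟨neg_one_le_Fd _, le_trans (Fd_nonpos _) zero_le_one⟩
    have h2 : |h| ≤ Real.sqrt v := by
      rw [← Real.sqrt_sq_eq_abs]
      exact Real.sqrt_le_sqrt (by linarith)
    have h3 : |Real.sqrt v| = Real.sqrt v := abs_of_pos hs
    rw [h3]
    calc |Fd (x / Real.sqrt v)| / Real.sqrt v * |h|
        ≤ 1 / Real.sqrt v * Real.sqrt v := by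
          apply mul_le_mul (by gcongr) h2 (abs_nonneg _) (by positivity)
      _ = 1 := by field_simp
  · simp

/-- If the square function of a simple martingale `φ` satisfies
`Sφ ≤ 1` almost surely, then `P(φ_∞ − φ_0 ≥ λ) ≤ (e/2)·e^{−λ}` for every `λ > 0`. -/
theorem tail_estimate
    {X : Type*} {m : MeasurableSpace X} {μ : Measure X} [IsProbabilityMeasure μ]
    (ℱ : Filtration ℕ m) (hℱ0 : ℱ 0 = ⊥)
    (φ : ℕ → X → ℝ) (hmart : Martingale φ ℱ μ)
    (N : ℕ) (hsimple : ∀ n, N ≤ n → φ n = φ N)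
    (hS : ∀ᵐ ω ∂μ, Real.sqrt (∑' n, (φ (n + 1) ω - φ n ω) ^ 2) ≤ 1)
    (lam : ℝ) (hlam : 0 < lam) :
    μ {ω | lam ≤ φ N ω - φ 0 ω} ≤ ENNReal.ofReal (Real.exp 1 / 2 * Real.exp (-lam)) := by
  classical
  set d : ℕ → X → ℝ := fun n ω => φ (n + 1) ω - φ n ω with hddef
  set Q : ℕ → X → ℝ := fun n ω => ∑ k ∈ Finset.range n, d k ω ^ 2 with hQdef
  set U : ℕ → X → ℝ := fun n ω => Phi (lam - (φ n ω - φ 0 ω)) (1 - Q n ω) with hUdef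
  set C : ℕ → X → ℝ := fun n ω => Csl (lam - (φ n ω - φ 0 ω)) (1 - Q n ω) with hCdef
  -- measurability of φ w.r.t. ℱ n and m
  have hφF : ∀ k n, k ≤ n → Measurable[ℱ n] (φ k) := fun k n hkn =>
    ((hmart.stronglyAdapted k).mono (ℱ.mono hkn)).measurable
  have hφm : ∀ k, Measurable (φ k) := fun k =>
    ((hmart.stronglyAdapted k).mono (ℱ.le k)).measurable
  have hdF : ∀ k n, k + 1 ≤ n → Measurable[ℱ n] (d k) := fun k n h =>
    (hφF (k + 1) n h).sub (hφF k n (by omega))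
  have hQF : ∀ n, Measurable[ℱ n] (Q n) := by
    intro n
    apply Finset.measurable_sum
    intro k hk
    have : k + 1 ≤ n := Finset.mem_range.mp hk
    exact ((hdF k n this).pow_const 2)
  have hxF : ∀ n, Measurable[ℱ n] fun ω => lam - (φ n ω - φ 0 ω) := fun n =>
    measurable_const.sub ((hφF n n le_rfl).sub (hφF 0 n (Nat.zero_le n)))
  have hUF : ∀ n, Measurable[ℱ n] (U n) := fun n =>
    measurable_Phi.comp ((hxF n).prodMk (measurable_const.sub (hQF n)))
  have hCF : ∀ n, Measurable[ℱ n] (C n) := fun n =>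
    measurable_Csl.comp ((hxF n).prodMk (measurable_const.sub (hQF n)))
  have hUm : ∀ n, Measurable (U n) := fun n => (hUF n).mono (ℱ.le n) le_rfl
  have hCm : ∀ n, Measurable (C n) := fun n => (hCF n).mono (ℱ.le n) le_rfl
  have hdm : ∀ n, Measurable (d n) := fun n => (hφm (n + 1)).sub (hφm n)
  -- a.e. bound on Q
  have hQae : ∀ᵐ ω ∂μ, ∀ n, Q n ω ≤ 1 := by
    filter_upwards [hS] with ω hω n
    have hsummable : Summable fun k => d k ω ^ 2 := by
      apply summable_of_ne_finset_zero (s := Finset.range N)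
      intro k hk
      have hkN : N ≤ k := by
        by_contra hlt
        exact hk (Finset.mem_range.mpr (by omega))
      have h1 : φ (k + 1) = φ N := hsimple (k + 1) (by omega)
      have h2 : φ k = φ N := hsimple k hkN
      simp [hddef, h1, h2]
    have htsum_le : (∑' k, d k ω ^ 2) ≤ 1 := by
      have hnn : 0 ≤ ∑' k, d k ω ^ 2 := tsum_nonneg fun k => sq_nonneg _
      nlinarith [Real.sq_sqrt hnn, Real.sqrt_nonneg (∑' k, d k ω ^ 2), hω]
    calc Q n ω ≤ ∑' k, d k ω ^ 2 :=
          hsummable.sum_le_tsum (Finset.range n) (fun k _ => sq_nonneg _)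
      _ ≤ 1 := htsum_le
  -- integrability of U n
  have hUint : ∀ n, Integrable (U n) μ := by
    intro n
    refine Integrable.mono' (integrable_const 1) (hUm n).aestronglyMeasurable ?_
    filter_upwards with ω
    rw [Real.norm_eq_abs, abs_le]
    constructor
    · linarith [Phi_nonneg (lam - (φ n ω - φ 0 ω)) (1 - Q n ω)]
    · exact Phi_le_one _ _
  have hQsucc : ∀ n ω, Q (n + 1) ω = Q n ω + d n ω ^ 2 := by
    intro n ω; simp [hQdef, Finset.sum_range_succ]
  have hCdint : ∀ n, Integrable (fun ω => C n ω * d n ω) μ := by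
    intro n
    refine Integrable.mono' (integrable_const 1) ((hCm n).mul (hdm n)).aestronglyMeasurable ?_
    filter_upwards [hQae] with ω hω
    rw [Real.norm_eq_abs]
    apply Csl_mul_bound
    have := hω (n + 1); rw [hQsucc n ω] at this; linarith
  have hdint : ∀ n, Integrable (d n) μ := fun n =>
    (hmart.integrable (n + 1)).sub (hmart.integrable n)
  have hCd0 : ∀ n, ∫ ω, C n ω * d n ω ∂μ = 0 := by
    intro n
    have hpull := condExp_mul_of_stronglyMeasurable_left (μ := μ) (hCF n).stronglyMeasurable
      (by exact hCdint n) (hdint n)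
    have hd0 : μ[d n | ℱ n] =ᵐ[μ] 0 := by
      have h1 : μ[φ (n + 1) | ℱ n] =ᵐ[μ] φ n := hmart.condExp_ae_eq (Nat.le_succ n)
      have h2 : μ[d n | ℱ n] =ᵐ[μ] μ[φ (n + 1) | ℱ n] - μ[φ n | ℱ n] :=
        condExp_sub (hmart.integrable (n + 1)) (hmart.integrable n) (ℱ n)
      have h3 : μ[φ n | ℱ n] = φ n :=
        condExp_of_stronglyMeasurable (ℱ.le n) (hmart.stronglyAdapted n) (hmart.integrable n)
      filter_upwards [h1, h2] with ω e1 e2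
      simp only [e2, Pi.sub_apply, e1, congrFun h3 ω, sub_self, Pi.zero_apply]
    have hzero : μ[C n * d n | ℱ n] =ᵐ[μ] 0 := by
      refine hpull.trans ?_
      filter_upwards [hd0] with ω hω
      simp [Pi.mul_apply, hω]
    calc ∫ ω, C n ω * d n ω ∂μ = ∫ ω, (μ[C n * d n | ℱ n]) ω ∂μ := by
          exact (integral_condExp (ℱ.le n) (f := C n * d n)).symm
      _ = ∫ _ω, (0:ℝ) ∂μ := integral_congr_ae hzero
      _ = 0 := integral_zero _ _
  -- one-step inequality a.e.
  have hstep : ∀ n, ∀ᵐ ω ∂μ, U (n + 1) ω ≤ U n ω + C n ω * d n ω := by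
    intro n
    filter_upwards [hQae] with ω hω
    have hv : 0 ≤ (1 - Q n ω) - d n ω ^ 2 := by
      have := hω (n + 1); rw [hQsucc n ω] at this; linarith
    have hst := step (lam - (φ n ω - φ 0 ω)) (1 - Q n ω) (d n ω) hv
    have e1 : lam - (φ n ω - φ 0 ω) - d n ω = lam - (φ (n + 1) ω - φ 0 ω) := by
      simp [hddef]; ring
    have e2 : (1 - Q n ω) - d n ω ^ 2 = 1 - Q (n + 1) ω := by rw [hQsucc]; ring
    rw [e1, e2] at hst
    exact hst
  have hmono : ∀ n, ∫ ω, U (n + 1) ω ∂μ ≤ ∫ ω, U n ω ∂μ := by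
    intro n
    calc ∫ ω, U (n + 1) ω ∂μ ≤ ∫ ω, (U n ω + C n ω * d n ω) ∂μ :=
        integral_mono_ae (hUint (n + 1)) ((hUint n).add (hCdint n)) (hstep n)
      _ = (∫ ω, U n ω ∂μ) + ∫ ω, C n ω * d n ω ∂μ := integral_add (hUint n) (hCdint n)
      _ = ∫ ω, U n ω ∂μ := by rw [hCd0 n, add_zero]
  have hchain : ∀ n, ∫ ω, U n ω ∂μ ≤ ∫ ω, U 0 ω ∂μ := by
    intro n
    induction n with
    | zero => exact le_rfl
    | succ k ih => exact (hmono k).trans ih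
  have hU0 : ∀ ω, U 0 ω = Fb lam := by
    intro ω
    have : Q 0 ω = 0 := by simp [hQdef]
    simp only [hUdef, this, sub_self, sub_zero, Phi]
    rw [if_pos one_pos, Real.sqrt_one, div_one]
  have hintU0 : ∫ ω, U 0 ω ∂μ = Fb lam := by
    simp only [hU0]
    simp [integral_const]
  -- indicator comparison
  have hAmeas : MeasurableSet {ω | lam ≤ φ N ω - φ 0 ω} :=
    measurableSet_le measurable_const ((hφm N).sub (hφm 0))
  have hind : ∀ᵐ ω ∂μ,
      Set.indicator {ω | lam ≤ φ N ω - φ 0 ω} (1 : X → ℝ) ω ≤ U N ω := by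
    filter_upwards [hQae] with ω hω
    by_cases hmem : ω ∈ {ω | lam ≤ φ N ω - φ 0 ω}
    · rw [Set.indicator_of_mem hmem, Pi.one_apply]
      have hx : lam - (φ N ω - φ 0 ω) ≤ 0 := by
        have : lam ≤ φ N ω - φ 0 ω := hmem
        linarith
      show (1:ℝ) ≤ Phi (lam - (φ N ω - φ 0 ω)) (1 - Q N ω)
      by_cases hv : 0 < 1 - Q N ω
      · rw [Phi, if_pos hv,
          Fb_of_nonpos (div_nonpos_of_nonpos_of_nonneg hx (Real.sqrt_nonneg _))]
      · rw [Phi, if_neg hv, if_pos hx]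
    · rw [Set.indicator_of_notMem hmem]
      exact Phi_nonneg _ _
  have hmesA : (μ {ω | lam ≤ φ N ω - φ 0 ω}).toReal ≤ Fb lam := by
    rw [← measureReal_def, ← MeasureTheory.integral_indicator_one hAmeas]
    calc ∫ ω, Set.indicator {ω | lam ≤ φ N ω - φ 0 ω} (1 : X → ℝ) ω ∂μ
        ≤ ∫ ω, U N ω ∂μ :=
          integral_mono_ae ((integrable_const 1).indicator hAmeas) (hUint N) hind
      _ ≤ ∫ ω, U 0 ω ∂μ := hchain N
      _ = Fb lam := hintU0
  -- final numeric bound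
  have hFb : Fb lam ≤ Real.exp 1 / 2 * Real.exp (-lam) := by
    have hexp : Real.exp 1 * Real.exp (-lam) = Real.exp (1 - lam) := by
      rw [← Real.exp_add]; ring_nf
    rcases le_or_gt lam 1 with hl | hl
    · rw [Fb_of_mid hlam hl]
      have hE := expLB (1 - lam) (by linarith)
      have hkey : (1 + (1 - lam) + (1 - lam) ^ 2 / 2) * (1 + lam ^ 2)
          = 2 + (1 - lam) ^ 4 / 2 := by ring
      have hpos : (0:ℝ) < 1 + lam ^ 2 := by positivity
      have h2 : 2 ≤ Real.exp (1 - lam) * (1 + lam ^ 2) := by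
        nlinarith [mul_le_mul_of_nonneg_right hE hpos.le, pow_nonneg (by linarith : (0:ℝ) ≤ 1 - lam) 4]
      rw [div_le_iff₀ hpos]
      nlinarith [hexp, h2]
    · rw [Fb_of_hi hl]
      apply le_of_eq
      rw [div_mul_eq_mul_div, hexp]
  calc μ {ω | lam ≤ φ N ω - φ 0 ω}
      = ENNReal.ofReal ((μ {ω | lam ≤ φ N ω - φ 0 ω}).toReal) :=
        (ENNReal.ofReal_toReal (measure_ne_top μ _)).symm
    _ ≤ ENNReal.ofReal (Real.exp 1 / 2 * Real.exp (-lam)) :=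
        ENNReal.ofReal_le_ofReal (le_trans hmesA hFb)
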